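/- With G = Z_{p1q1} × Z_{p2q2} × Z_{p3q3}, A the standard box, and S the grid spectrum, define S' by replacing the grid-line L_1 = {0,q_1,...,(p_1−1)q_1} × {q_2} × {0} with L_1' (adding +1 to first coordinates), L_2 = {0} × {0,q_2,...,(p_2−1)q_2} × {q_3} with L_2' (adding +1 to second coordinates), and L_3 = {q_1} × {0} × {0,q_3,...,(p_3−1)q_3} with L_3' (adding +1 to third coordinates). Then for any r ∈ S' − S', either q_1 | r_1, or q_2 | r_2, or q_3 | r_3, and consequently S' is still a spectrum of A. -/

import Mathlib

open Complex Real Finset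

lemma geom_exp_zero (p q : ℕ) (hp : 1 ≤ p) (hq : 1 ≤ q) (d : ℤ)
    (hdvd : (q : ℤ) ∣ d) (hd0 : d ≠ 0) (hlt : d.natAbs < p * q) :
    ∑ x : Fin p, Complex.exp (2 * π * Complex.I * (((d : ℝ) * (x : ℕ) / ((p : ℝ) * (q : ℝ)) : ℝ) : ℂ)) = 0 := by
  obtain ⟨m, rfl⟩ := hdvd
  have hq0 : (q : ℂ) ≠ 0 := Nat.cast_ne_zero.mpr (by omega)
  have hp0 : (p : ℂ) ≠ 0 := Nat.cast_ne_zero.mpr (by omega)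
  have hm0 : m ≠ 0 := by rintro rfl; simp at hd0
  have hmlt : m.natAbs < p := by
    have h1 : ((q:ℤ)*m).natAbs = q * m.natAbs := by simp [Int.natAbs_mul]
    have h2 : q * m.natAbs < q * p := by rw [← h1, Nat.mul_comm q p]; exact hlt
    exact Nat.lt_of_mul_lt_mul_left h2
  set ζ : ℂ := Complex.exp (2 * π * Complex.I * ((m : ℂ) / (p : ℂ))) with hζ
  have hne1 : ζ ≠ 1 := by
    intro h
    rw [hζ, Complex.exp_eq_one_iff] at h
    obtain ⟨n, hn⟩ := h
    have h2 : (2 * π * Complex.I : ℂ) ≠ 0 := by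
      simp [Real.pi_ne_zero, Complex.I_ne_zero]
    have hmn : (m : ℂ) / (p : ℂ) = (n : ℂ) :=
      mul_left_cancel₀ h2 (by rw [hn]; ring)
    have hmp : (m : ℂ) = (n : ℂ) * (p : ℂ) := by
      field_simp at hmn; exact hmn.trans (mul_comm _ _)
    have hmz : m = n * (p : ℤ) := by exact_mod_cast hmp
    have hdvd' : (p : ℤ) ∣ (m.natAbs : ℤ) := Int.dvd_natAbs.mpr ⟨n, by rw [hmz]; ring⟩
    have hle := Int.le_of_dvd (by exact_mod_cast Int.natAbs_pos.mpr hm0) hdvd'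
    omega
  have hpow : ζ ^ p = 1 := by
    rw [hζ, ← Complex.exp_nat_mul]
    have h3 : (p : ℂ) * (2 * π * Complex.I * ((m : ℂ) / (p : ℂ))) = (m : ℤ) * (2 * π * Complex.I) := by
      field_simp
    rw [h3, Complex.exp_int_mul_two_pi_mul_I]
  have hsum : ∑ x : Fin p, ζ ^ (x : ℕ) = 0 := by
    rw [Fin.sum_univ_eq_sum_range, geom_sum_eq hne1, hpow]
    simp
  rw [← hsum]
  refine Finset.sum_congr rfl fun x _ => ?_
  rw [hζ, ← Complex.exp_nat_mul]
  congr 1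
  push_cast
  field_simp

lemma box_bounds (P Q a : ℤ) (hP : 2 ≤ P) (hQ : 2 ≤ Q) (ha1 : 0 ≤ a) (ha2 : a < P) :
    0 ≤ Q*a ∧ Q*a < P*Q ∧ 0 ≤ Q*a+1 ∧ Q*a+1 < P*Q := by
  refine ⟨by positivity, by nlinarith, by positivity, by nlinarith⟩

/-- Szabó-type perturbation of the grid spectrum. `S` is the grid
`∏_j {0, q_j, …, (p_j−1)q_j}`, the grid-lines `L₁, L₂, L₃` are replaced by
their shifted versions `L₁', L₂', L₃'` (adding `+1` to the first, second, third
coordinate respectively), giving `S' = (S \ (L₁∪L₂∪L₃)) ∪ L₁' ∪ L₂' ∪ L₃'`.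
Then every difference `r ∈ S' − S'` has `q₁ ∣ r₁` or `q₂ ∣ r₂` or `q₃ ∣ r₃`,
and consequently `S'` is still a spectrum of the box
`A = ∏_j {0, 1/(p_jq_j), …, (p_j−1)/(p_jq_j)}`. -/
theorem perturbed_grid_is_spectrum
    (p q : Fin 3 → ℕ) (hp : ∀ j, 2 ≤ p j) (hq : ∀ j, 2 ≤ q j)
    (S L1 L2 L3 L1' L2' L3' S' : Finset (ℤ × ℤ × ℤ))
    (hS : S = Finset.image
      (fun t : Fin (p 0) × Fin (p 1) × Fin (p 2) =>
        (((q 0 : ℤ) * t.1, (q 1 : ℤ) * t.2.1, (q 2 : ℤ) * t.2.2) : ℤ × ℤ × ℤ))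
      Finset.univ)
    (hL1 : L1 = Finset.image
      (fun x : Fin (p 0) => (((q 0 : ℤ) * x, (q 1 : ℤ), (0 : ℤ)) : ℤ × ℤ × ℤ)) Finset.univ)
    (hL1' : L1' = Finset.image
      (fun x : Fin (p 0) => (((q 0 : ℤ) * x + 1, (q 1 : ℤ), (0 : ℤ)) : ℤ × ℤ × ℤ)) Finset.univ)
    (hL2 : L2 = Finset.image
      (fun y : Fin (p 1) => (((0 : ℤ), (q 1 : ℤ) * y, (q 2 : ℤ)) : ℤ × ℤ × ℤ)) Finset.univ)
    (hL2' : L2' = Finset.image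
      (fun y : Fin (p 1) => (((0 : ℤ), (q 1 : ℤ) * y + 1, (q 2 : ℤ)) : ℤ × ℤ × ℤ)) Finset.univ)
    (hL3 : L3 = Finset.image
      (fun z : Fin (p 2) => (((q 0 : ℤ), (0 : ℤ), (q 2 : ℤ) * z) : ℤ × ℤ × ℤ)) Finset.univ)
    (hL3' : L3' = Finset.image
      (fun z : Fin (p 2) => (((q 0 : ℤ), (0 : ℤ), (q 2 : ℤ) * z + 1) : ℤ × ℤ × ℤ)) Finset.univ)
    (hS' : S' = (S \ (L1 ∪ L2 ∪ L3)) ∪ L1' ∪ L2' ∪ L3') :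
    (∀ s ∈ S', ∀ s' ∈ S',
      (q 0 : ℤ) ∣ (s.1 - s'.1) ∨ (q 1 : ℤ) ∣ (s.2.1 - s'.2.1) ∨ (q 2 : ℤ) ∣ (s.2.2 - s'.2.2)) ∧
    (∀ s ∈ S', ∀ s' ∈ S', s ≠ s' →
      ∑ x : Fin (p 0), ∑ y : Fin (p 1), ∑ z : Fin (p 2),
        Complex.exp (2 * π * Complex.I *
          ((((s.1 - s'.1 : ℤ) : ℝ) * x / (p 0 * q 0)
            + ((s.2.1 - s'.2.1 : ℤ) : ℝ) * y / (p 1 * q 1)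
            + ((s.2.2 - s'.2.2 : ℤ) : ℝ) * z / (p 2 * q 2) : ℝ) : ℂ)) = 0) := by
  subst hS hL1 hL1' hL2 hL2' hL3 hL3' hS'
  have hq0 : (2:ℤ) ≤ (q 0 : ℤ) := by exact_mod_cast hq 0
  have hq1 : (2:ℤ) ≤ (q 1 : ℤ) := by exact_mod_cast hq 1
  have hq2 : (2:ℤ) ≤ (q 2 : ℤ) := by exact_mod_cast hq 2
  have hp0 : (2:ℤ) ≤ (p 0 : ℤ) := by exact_mod_cast hp 0
  have hp1 : (2:ℤ) ≤ (p 1 : ℤ) := by exact_mod_cast hp 1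
  have hp2 : (2:ℤ) ≤ (p 2 : ℤ) := by exact_mod_cast hp 2
  -- structural characterization of elements of S'
  have struct : ∀ s ∈ ((Finset.image
      (fun t : Fin (p 0) × Fin (p 1) × Fin (p 2) =>
        (((q 0 : ℤ) * t.1, (q 1 : ℤ) * t.2.1, (q 2 : ℤ) * t.2.2) : ℤ × ℤ × ℤ))
      Finset.univ \ (Finset.image
      (fun x : Fin (p 0) => (((q 0 : ℤ) * x, (q 1 : ℤ), (0 : ℤ)) : ℤ × ℤ × ℤ)) Finset.univ
      ∪ Finset.image
      (fun y : Fin (p 1) => (((0 : ℤ), (q 1 : ℤ) * y, (q 2 : ℤ)) : ℤ × ℤ × ℤ)) Finset.univ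
      ∪ Finset.image
      (fun z : Fin (p 2) => (((q 0 : ℤ), (0 : ℤ), (q 2 : ℤ) * z) : ℤ × ℤ × ℤ)) Finset.univ))
      ∪ Finset.image
      (fun x : Fin (p 0) => (((q 0 : ℤ) * x + 1, (q 1 : ℤ), (0 : ℤ)) : ℤ × ℤ × ℤ)) Finset.univ
      ∪ Finset.image
      (fun y : Fin (p 1) => (((0 : ℤ), (q 1 : ℤ) * y + 1, (q 2 : ℤ)) : ℤ × ℤ × ℤ)) Finset.univ
      ∪ Finset.image
      (fun z : Fin (p 2) => (((q 0 : ℤ), (0 : ℤ), (q 2 : ℤ) * z + 1) : ℤ × ℤ × ℤ)) Finset.univ),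
      (∃ a : Fin (p 0), ∃ b : Fin (p 1), ∃ c : Fin (p 2),
        s = (((q 0 : ℤ) * a, (q 1 : ℤ) * b, (q 2 : ℤ) * c) : ℤ × ℤ × ℤ) ∧
        ¬((q 1 : ℤ) * b = (q 1 : ℤ) ∧ (q 2 : ℤ) * c = 0) ∧
        ¬((q 0 : ℤ) * a = 0 ∧ (q 2 : ℤ) * c = (q 2 : ℤ)) ∧
        ¬((q 0 : ℤ) * a = (q 0 : ℤ) ∧ (q 1 : ℤ) * b = 0))
      ∨ (∃ a : Fin (p 0), s = (((q 0 : ℤ) * a + 1, (q 1 : ℤ), (0:ℤ)) : ℤ × ℤ × ℤ))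
      ∨ (∃ b : Fin (p 1), s = (((0:ℤ), (q 1 : ℤ) * b + 1, (q 2 : ℤ)) : ℤ × ℤ × ℤ))
      ∨ (∃ c : Fin (p 2), s = (((q 0 : ℤ), (0:ℤ), (q 2 : ℤ) * c + 1) : ℤ × ℤ × ℤ)) := by
    intro s hs
    simp only [Finset.mem_union, Finset.mem_sdiff, Finset.mem_image, Finset.mem_univ,
      true_and] at hs
    rcases hs with ((⟨⟨t, rfl⟩, hnot⟩ | ⟨a, rfl⟩) | ⟨b, rfl⟩) | ⟨c, rfl⟩
    · push_neg at hnot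
      obtain ⟨⟨hn1, hn2⟩, hn3⟩ := hnot
      refine Or.inl ⟨t.1, t.2.1, t.2.2, rfl, ?_, ?_, ?_⟩
      · rintro ⟨h1, h2⟩
        exact hn1 t.1 (by simp [Prod.ext_iff, h1, h2])
      · rintro ⟨h1, h2⟩
        exact hn2 t.2.1 (by simp [Prod.ext_iff, h1, h2])
      · rintro ⟨h1, h2⟩
        exact hn3 t.2.2 (by simp [Prod.ext_iff, h1, h2])
    · exact Or.inr (Or.inl ⟨a, rfl⟩)
    · exact Or.inr (Or.inr (Or.inl ⟨b, rfl⟩))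
    · exact Or.inr (Or.inr (Or.inr ⟨c, rfl⟩))
  -- bounds on coordinates
  have hb : ∀ s ∈ ((Finset.image
      (fun t : Fin (p 0) × Fin (p 1) × Fin (p 2) =>
        (((q 0 : ℤ) * t.1, (q 1 : ℤ) * t.2.1, (q 2 : ℤ) * t.2.2) : ℤ × ℤ × ℤ))
      Finset.univ \ (Finset.image
      (fun x : Fin (p 0) => (((q 0 : ℤ) * x, (q 1 : ℤ), (0 : ℤ)) : ℤ × ℤ × ℤ)) Finset.univ
      ∪ Finset.image
      (fun y : Fin (p 1) => (((0 : ℤ), (q 1 : ℤ) * y, (q 2 : ℤ)) : ℤ × ℤ × ℤ)) Finset.univ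
      ∪ Finset.image
      (fun z : Fin (p 2) => (((q 0 : ℤ), (0 : ℤ), (q 2 : ℤ) * z) : ℤ × ℤ × ℤ)) Finset.univ))
      ∪ Finset.image
      (fun x : Fin (p 0) => (((q 0 : ℤ) * x + 1, (q 1 : ℤ), (0 : ℤ)) : ℤ × ℤ × ℤ)) Finset.univ
      ∪ Finset.image
      (fun y : Fin (p 1) => (((0 : ℤ), (q 1 : ℤ) * y + 1, (q 2 : ℤ)) : ℤ × ℤ × ℤ)) Finset.univ
      ∪ Finset.image
      (fun z : Fin (p 2) => (((q 0 : ℤ), (0 : ℤ), (q 2 : ℤ) * z + 1) : ℤ × ℤ × ℤ)) Finset.univ),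
      (0 ≤ s.1 ∧ s.1 < (p 0 : ℤ) * (q 0 : ℤ)) ∧
      (0 ≤ s.2.1 ∧ s.2.1 < (p 1 : ℤ) * (q 1 : ℤ)) ∧
      (0 ≤ s.2.2 ∧ s.2.2 < (p 2 : ℤ) * (q 2 : ℤ)) := by
    intro s hs
    have hA : ∀ a : Fin (p 0), 0 ≤ (q 0:ℤ)*(a:ℤ) ∧ (q 0:ℤ)*(a:ℤ) < (p 0:ℤ)*(q 0:ℤ) ∧
        0 ≤ (q 0:ℤ)*(a:ℤ)+1 ∧ (q 0:ℤ)*(a:ℤ)+1 < (p 0:ℤ)*(q 0:ℤ) := fun a =>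
      box_bounds _ _ _ hp0 hq0 (Int.natCast_nonneg _) (by exact_mod_cast a.isLt)
    have hB : ∀ b : Fin (p 1), 0 ≤ (q 1:ℤ)*(b:ℤ) ∧ (q 1:ℤ)*(b:ℤ) < (p 1:ℤ)*(q 1:ℤ) ∧
        0 ≤ (q 1:ℤ)*(b:ℤ)+1 ∧ (q 1:ℤ)*(b:ℤ)+1 < (p 1:ℤ)*(q 1:ℤ) := fun b =>
      box_bounds _ _ _ hp1 hq1 (Int.natCast_nonneg _) (by exact_mod_cast b.isLt)
    have hC : ∀ c : Fin (p 2), 0 ≤ (q 2:ℤ)*(c:ℤ) ∧ (q 2:ℤ)*(c:ℤ) < (p 2:ℤ)*(q 2:ℤ) ∧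
        0 ≤ (q 2:ℤ)*(c:ℤ)+1 ∧ (q 2:ℤ)*(c:ℤ)+1 < (p 2:ℤ)*(q 2:ℤ) := fun c =>
      box_bounds _ _ _ hp2 hq2 (Int.natCast_nonneg _) (by exact_mod_cast c.isLt)
    have hc0 : (0:ℤ) ≤ (q 0:ℤ) ∧ (q 0:ℤ) < (p 0:ℤ)*(q 0:ℤ) := ⟨by omega, by nlinarith⟩
    have hc1 : (0:ℤ) ≤ (q 1:ℤ) ∧ (q 1:ℤ) < (p 1:ℤ)*(q 1:ℤ) := ⟨by omega, by nlinarith⟩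
    have hc2 : (0:ℤ) ≤ (q 2:ℤ) ∧ (q 2:ℤ) < (p 2:ℤ)*(q 2:ℤ) := ⟨by omega, by nlinarith⟩
    have hz0 : (0:ℤ) ≤ (0:ℤ) ∧ (0:ℤ) < (p 0:ℤ)*(q 0:ℤ) := ⟨le_refl _, by nlinarith⟩
    have hz1 : (0:ℤ) ≤ (0:ℤ) ∧ (0:ℤ) < (p 1:ℤ)*(q 1:ℤ) := ⟨le_refl _, by nlinarith⟩
    have hz2 : (0:ℤ) ≤ (0:ℤ) ∧ (0:ℤ) < (p 2:ℤ)*(q 2:ℤ) := ⟨le_refl _, by nlinarith⟩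
    rcases struct s hs with ⟨a, b, c, rfl, -⟩ | ⟨a, rfl⟩ | ⟨b, rfl⟩ | ⟨c, rfl⟩
    · exact ⟨⟨(hA a).1, (hA a).2.1⟩, ⟨(hB b).1, (hB b).2.1⟩, (hC c).1, (hC c).2.1⟩
    · exact ⟨⟨(hA a).2.2.1, (hA a).2.2.2⟩, ⟨hc1.1, hc1.2⟩, hz2.1, hz2.2⟩
    · exact ⟨⟨hz0.1, hz0.2⟩, ⟨(hB b).2.2.1, (hB b).2.2.2⟩, hc2.1, hc2.2⟩
    · exact ⟨⟨hc0.1, hc0.2⟩, ⟨hz1.1, hz1.2⟩, (hC c).2.2.1, (hC c).2.2.2⟩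
  -- key lemma
  have key : ∀ s, ∀ t : ℤ × ℤ × ℤ,
      ((∃ a : Fin (p 0), ∃ b : Fin (p 1), ∃ c : Fin (p 2),
        s = (((q 0 : ℤ) * a, (q 1 : ℤ) * b, (q 2 : ℤ) * c) : ℤ × ℤ × ℤ) ∧
        ¬((q 1 : ℤ) * b = (q 1 : ℤ) ∧ (q 2 : ℤ) * c = 0) ∧
        ¬((q 0 : ℤ) * a = 0 ∧ (q 2 : ℤ) * c = (q 2 : ℤ)) ∧
        ¬((q 0 : ℤ) * a = (q 0 : ℤ) ∧ (q 1 : ℤ) * b = 0))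
      ∨ (∃ a : Fin (p 0), s = (((q 0 : ℤ) * a + 1, (q 1 : ℤ), (0:ℤ)) : ℤ × ℤ × ℤ))
      ∨ (∃ b : Fin (p 1), s = (((0:ℤ), (q 1 : ℤ) * b + 1, (q 2 : ℤ)) : ℤ × ℤ × ℤ))
      ∨ (∃ c : Fin (p 2), s = (((q 0 : ℤ), (0:ℤ), (q 2 : ℤ) * c + 1) : ℤ × ℤ × ℤ))) →
      ((∃ a : Fin (p 0), ∃ b : Fin (p 1), ∃ c : Fin (p 2),
        t = (((q 0 : ℤ) * a, (q 1 : ℤ) * b, (q 2 : ℤ) * c) : ℤ × ℤ × ℤ) ∧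
        ¬((q 1 : ℤ) * b = (q 1 : ℤ) ∧ (q 2 : ℤ) * c = 0) ∧
        ¬((q 0 : ℤ) * a = 0 ∧ (q 2 : ℤ) * c = (q 2 : ℤ)) ∧
        ¬((q 0 : ℤ) * a = (q 0 : ℤ) ∧ (q 1 : ℤ) * b = 0))
      ∨ (∃ a : Fin (p 0), t = (((q 0 : ℤ) * a + 1, (q 1 : ℤ), (0:ℤ)) : ℤ × ℤ × ℤ))
      ∨ (∃ b : Fin (p 1), t = (((0:ℤ), (q 1 : ℤ) * b + 1, (q 2 : ℤ)) : ℤ × ℤ × ℤ))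
      ∨ (∃ c : Fin (p 2), t = (((q 0 : ℤ), (0:ℤ), (q 2 : ℤ) * c + 1) : ℤ × ℤ × ℤ))) →
      s ≠ t →
      ((q 0 : ℤ) ∣ (s.1 - t.1) ∧ s.1 - t.1 ≠ 0) ∨
      ((q 1 : ℤ) ∣ (s.2.1 - t.2.1) ∧ s.2.1 - t.2.1 ≠ 0) ∨
      ((q 2 : ℤ) ∣ (s.2.2 - t.2.2) ∧ s.2.2 - t.2.2 ≠ 0) := by
    intro s t hsm htm hne
    rcases hsm with ⟨a, b, c, rfl, hx1, hx2, hx3⟩ | ⟨a, rfl⟩ | ⟨b, rfl⟩ | ⟨c, rfl⟩ <;>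
      rcases htm with ⟨a', b', c', rfl, hy1, hy2, hy3⟩ | ⟨a', rfl⟩ | ⟨b', rfl⟩ | ⟨c', rfl⟩ <;>
      dsimp only
    -- grid vs grid
    · by_cases h0 : (q 0:ℤ)*(a:ℤ) = (q 0:ℤ)*(a':ℤ)
      · by_cases h1 : (q 1:ℤ)*(b:ℤ) = (q 1:ℤ)*(b':ℤ)
        · by_cases h2 : (q 2:ℤ)*(c:ℤ) = (q 2:ℤ)*(c':ℤ)
          · exact absurd (by simp [Prod.ext_iff, h0, h1, h2]) hne
          · exact Or.inr (Or.inr ⟨⟨(c:ℤ) - (c':ℤ), by ring⟩, by intro hc; exact h2 (by linarith)⟩)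
        · exact Or.inr (Or.inl ⟨⟨(b:ℤ) - (b':ℤ), by ring⟩, by intro hc; exact h1 (by linarith)⟩)
      · exact Or.inl ⟨⟨(a:ℤ) - (a':ℤ), by ring⟩, by intro hc; exact h0 (by linarith)⟩
    -- grid vs L1'
    · by_cases h1 : (q 1:ℤ)*(b:ℤ) = (q 1:ℤ)
      · by_cases h2 : (q 2:ℤ)*(c:ℤ) = 0
        · exact absurd ⟨h1, h2⟩ hx1
        · exact Or.inr (Or.inr ⟨⟨(c:ℤ), by ring⟩, by intro hc; exact h2 (by linarith)⟩)
      · exact Or.inr (Or.inl ⟨⟨(b:ℤ) - 1, by ring⟩, by intro hc; exact h1 (by linarith)⟩)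
    -- grid vs L2'
    · by_cases h0 : (q 0:ℤ)*(a:ℤ) = 0
      · by_cases h2 : (q 2:ℤ)*(c:ℤ) = (q 2:ℤ)
        · exact absurd ⟨h0, h2⟩ hx2
        · exact Or.inr (Or.inr ⟨⟨(c:ℤ) - 1, by ring⟩, by intro hc; exact h2 (by linarith)⟩)
      · exact Or.inl ⟨⟨(a:ℤ), by ring⟩, by intro hc; exact h0 (by linarith)⟩
    -- grid vs L3'
    · by_cases h0 : (q 0:ℤ)*(a:ℤ) = (q 0:ℤ)
      · by_cases h1 : (q 1:ℤ)*(b:ℤ) = 0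
        · exact absurd ⟨h0, h1⟩ hx3
        · exact Or.inr (Or.inl ⟨⟨(b:ℤ), by ring⟩, by intro hc; exact h1 (by linarith)⟩)
      · exact Or.inl ⟨⟨(a:ℤ) - 1, by ring⟩, by intro hc; exact h0 (by linarith)⟩
    -- L1' vs grid
    · by_cases h1 : (q 1:ℤ)*(b':ℤ) = (q 1:ℤ)
      · by_cases h2 : (q 2:ℤ)*(c':ℤ) = 0
        · exact absurd ⟨h1, h2⟩ hy1
        · exact Or.inr (Or.inr ⟨⟨-(c':ℤ), by ring⟩, by intro hc; exact h2 (by linarith)⟩)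
      · exact Or.inr (Or.inl ⟨⟨1 - (b':ℤ), by ring⟩, by intro hc; exact h1 (by linarith)⟩)
    -- L1' vs L1'
    · by_cases h0 : (q 0:ℤ)*(a:ℤ) = (q 0:ℤ)*(a':ℤ)
      · exact absurd (by simp [Prod.ext_iff, h0]) hne
      · exact Or.inl ⟨⟨(a:ℤ) - (a':ℤ), by ring⟩, by intro hc; exact h0 (by linarith)⟩
    -- L1' vs L2'
    · exact Or.inr (Or.inr ⟨⟨-1, by ring⟩, by omega⟩)
    -- L1' vs L3'
    · exact Or.inr (Or.inl ⟨⟨1, by ring⟩, by omega⟩)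
    -- L2' vs grid
    · by_cases h0 : (q 0:ℤ)*(a':ℤ) = 0
      · by_cases h2 : (q 2:ℤ)*(c':ℤ) = (q 2:ℤ)
        · exact absurd ⟨h0, h2⟩ hy2
        · exact Or.inr (Or.inr ⟨⟨1 - (c':ℤ), by ring⟩, by intro hc; exact h2 (by linarith)⟩)
      · exact Or.inl ⟨⟨-(a':ℤ), by ring⟩, by intro hc; exact h0 (by linarith)⟩
    -- L2' vs L1'
    · exact Or.inr (Or.inr ⟨⟨1, by ring⟩, by omega⟩)
    -- L2' vs L2'
    · by_cases h1 : (q 1:ℤ)*(b:ℤ) = (q 1:ℤ)*(b':ℤ)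
      · exact absurd (by simp [Prod.ext_iff, h1]) hne
      · exact Or.inr (Or.inl ⟨⟨(b:ℤ) - (b':ℤ), by ring⟩, by intro hc; exact h1 (by linarith)⟩)
    -- L2' vs L3'
    · exact Or.inl ⟨⟨-1, by ring⟩, by omega⟩
    -- L3' vs grid
    · by_cases h0 : (q 0:ℤ)*(a':ℤ) = (q 0:ℤ)
      · by_cases h1 : (q 1:ℤ)*(b':ℤ) = 0
        · exact absurd ⟨h0, h1⟩ hy3
        · exact Or.inr (Or.inl ⟨⟨-(b':ℤ), by ring⟩, by intro hc; exact h1 (by linarith)⟩)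
      · exact Or.inl ⟨⟨1 - (a':ℤ), by ring⟩, by intro hc; exact h0 (by linarith)⟩
    -- L3' vs L1'
    · exact Or.inr (Or.inl ⟨⟨-1, by ring⟩, by omega⟩)
    -- L3' vs L2'
    · exact Or.inl ⟨⟨1, by ring⟩, by omega⟩
    -- L3' vs L3'
    · by_cases h2 : (q 2:ℤ)*(c:ℤ) = (q 2:ℤ)*(c':ℤ)
      · exact absurd (by simp [Prod.ext_iff, h2]) hne
      · exact Or.inr (Or.inr ⟨⟨(c:ℤ) - (c':ℤ), by ring⟩, by intro hc; exact h2 (by linarith)⟩)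
  constructor
  · intro s hs t ht
    by_cases h : s = t
    · subst h; left; simp
    · rcases key s t (struct s hs) (struct t ht) h with ⟨h1, -⟩ | ⟨h1, -⟩ | ⟨h1, -⟩
      · exact Or.inl h1
      · exact Or.inr (Or.inl h1)
      · exact Or.inr (Or.inr h1)
  · intro s hs t ht hne
    obtain ⟨⟨hs1a, hs1b⟩, ⟨hs2a, hs2b⟩, hs3a, hs3b⟩ := hb s hs
    obtain ⟨⟨ht1a, ht1b⟩, ⟨ht2a, ht2b⟩, ht3a, ht3b⟩ := hb t ht
    have hPQ0 : ((p 0 * q 0 : ℕ) : ℤ) = (p 0 : ℤ) * (q 0 : ℤ) := by push_cast; ring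
    have hPQ1 : ((p 1 * q 1 : ℕ) : ℤ) = (p 1 : ℤ) * (q 1 : ℤ) := by push_cast; ring
    have hPQ2 : ((p 2 * q 2 : ℕ) : ℤ) = (p 2 : ℤ) * (q 2 : ℤ) := by push_cast; ring
    have hsplit : ∀ (x : Fin (p 0)) (y : Fin (p 1)) (z : Fin (p 2)),
        Complex.exp (2 * π * Complex.I *
          ((((s.1 - t.1 : ℤ) : ℝ) * x / (p 0 * q 0)
            + ((s.2.1 - t.2.1 : ℤ) : ℝ) * y / (p 1 * q 1)
            + ((s.2.2 - t.2.2 : ℤ) : ℝ) * z / (p 2 * q 2) : ℝ) : ℂ)) =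
        Complex.exp (2 * π * Complex.I * ((((s.1 - t.1 : ℤ) : ℝ) * (x : ℕ) / ((p 0 : ℝ) * (q 0 : ℝ)) : ℝ) : ℂ)) *
        Complex.exp (2 * π * Complex.I * ((((s.2.1 - t.2.1 : ℤ) : ℝ) * (y : ℕ) / ((p 1 : ℝ) * (q 1 : ℝ)) : ℝ) : ℂ)) *
        Complex.exp (2 * π * Complex.I * ((((s.2.2 - t.2.2 : ℤ) : ℝ) * (z : ℕ) / ((p 2 : ℝ) * (q 2 : ℝ)) : ℝ) : ℂ)) := by
      intro x y z
      rw [← Complex.exp_add, ← Complex.exp_add]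
      congr 1
      push_cast
      ring
    have hfactor : (∑ x : Fin (p 0), ∑ y : Fin (p 1), ∑ z : Fin (p 2),
        Complex.exp (2 * π * Complex.I *
          ((((s.1 - t.1 : ℤ) : ℝ) * x / (p 0 * q 0)
            + ((s.2.1 - t.2.1 : ℤ) : ℝ) * y / (p 1 * q 1)
            + ((s.2.2 - t.2.2 : ℤ) : ℝ) * z / (p 2 * q 2) : ℝ) : ℂ))) =
        (∑ x : Fin (p 0), Complex.exp (2 * π * Complex.I * ((((s.1 - t.1 : ℤ) : ℝ) * (x : ℕ) / ((p 0 : ℝ) * (q 0 : ℝ)) : ℝ) : ℂ))) *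
        (∑ y : Fin (p 1), Complex.exp (2 * π * Complex.I * ((((s.2.1 - t.2.1 : ℤ) : ℝ) * (y : ℕ) / ((p 1 : ℝ) * (q 1 : ℝ)) : ℝ) : ℂ))) *
        (∑ z : Fin (p 2), Complex.exp (2 * π * Complex.I * ((((s.2.2 - t.2.2 : ℤ) : ℝ) * (z : ℕ) / ((p 2 : ℝ) * (q 2 : ℝ)) : ℝ) : ℂ))) := by
      simp_rw [hsplit]
      simp only [← Finset.sum_mul, ← Finset.mul_sum]
    rw [hfactor]
    rcases key s t (struct s hs) (struct t ht) hne with ⟨hdvd, hne0⟩ | ⟨hdvd, hne0⟩ | ⟨hdvd, hne0⟩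
    · have hz := geom_exp_zero (p 0) (q 0) (by omega) (by omega) (s.1 - t.1) hdvd hne0 (by omega)
      rw [hz, zero_mul, zero_mul]
    · have hz := geom_exp_zero (p 1) (q 1) (by omega) (by omega) (s.2.1 - t.2.1) hdvd hne0 (by omega)
      rw [hz, mul_zero, zero_mul]
    · have hz := geom_exp_zero (p 2) (q 2) (by omega) (by omega) (s.2.2 - t.2.2) hdvd hne0 (by omega)
      rw [hz, mul_zero]
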